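/- For every real z > 0, 1/z² − 1/12 ≤ e^z/(e^z − 1)² ≤ 1/z². -/

import Mathlib

open Real

/-- If `f 0 = 0` and `f' ≥ 0` on `[0,∞)`, then `f ≥ 0` on `[0,∞)`. -/
lemma aux_nonneg_of_deriv (f f' : ℝ → ℝ) (hd : ∀ t, HasDerivAt f (f' t) t)
    (h0 : f 0 = 0) (hf' : ∀ t, 0 ≤ t → 0 ≤ f' t) : ∀ t, 0 ≤ t → 0 ≤ f t := by
  have hmono : MonotoneOn f (Set.Ici 0) := by
    apply monotoneOn_of_deriv_nonneg (convex_Ici 0)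
    · exact fun t _ => (hd t).continuousAt.continuousWithinAt
    · exact fun t _ => ((hd t).differentiableAt).differentiableWithinAt
    · intro t ht
      rw [(hd t).deriv]
      exact hf' t (le_of_lt (by simpa using ht))
  intro t ht
  have := hmono (Set.self_mem_Ici) (Set.mem_Ici.mpr ht) ht
  linarith [h0 ▸ this]

lemma sinh_le_mul_cosh (t : ℝ) (ht : 0 ≤ t) : Real.sinh t ≤ t * Real.cosh t := by
  have key : ∀ s, 0 ≤ s → 0 ≤ s * Real.cosh s - Real.sinh s := by
    apply aux_nonneg_of_deriv _ (fun s => s * Real.sinh s)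
    · intro s
      have h : HasDerivAt (fun s : ℝ => s * Real.cosh s - Real.sinh s)
          (1 * Real.cosh s + s * Real.sinh s - Real.cosh s) s :=
        ((hasDerivAt_id s).mul (Real.hasDerivAt_cosh s)).sub (Real.hasDerivAt_sinh s)
      convert h using 1; ring
    · simp
    · intro s hs
      exact mul_nonneg hs (Real.sinh_nonneg_iff.mpr hs)
  linarith [key t ht]

lemma cosh_key (t : ℝ) (ht : 0 ≤ t) :
    (Real.cosh t - 1) * (12 - t ^ 2) ≤ 6 * t ^ 2 := by
  -- g3 ≥ 0
  have hg3 : ∀ s, 0 ≤ s → 0 ≤ (s ^ 2 - 6) * Real.sinh s + 6 * s * Real.cosh s := by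
    intro s hs
    have h1 := sinh_le_mul_cosh s hs
    have h2 : 0 ≤ Real.sinh s := Real.sinh_nonneg_iff.mpr hs
    nlinarith [mul_nonneg (sq_nonneg s) h2]
  -- g2 ≥ 0
  have hg2 : ∀ s, 0 ≤ s → 0 ≤ 10 + 4 * s * Real.sinh s - (10 - s ^ 2) * Real.cosh s := by
    apply aux_nonneg_of_deriv _ (fun s => (s ^ 2 - 6) * Real.sinh s + 6 * s * Real.cosh s)
    · intro s
      have h : HasDerivAt (fun s : ℝ => 10 + 4 * s * Real.sinh s - (10 - s ^ 2) * Real.cosh s)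
          ((0 + (4 * 1) * Real.sinh s + (4 * s) * Real.cosh s)
            - ((0 - 2 * s) * Real.cosh s + (10 - s ^ 2) * Real.sinh s)) s := by
        have ha : HasDerivAt (fun s : ℝ => 10 + 4 * s * Real.sinh s)
            (0 + ((4 * 1) * Real.sinh s + (4 * s) * Real.cosh s)) s :=
          (hasDerivAt_const s (10 : ℝ)).add
            ((((hasDerivAt_id s).const_mul 4)).mul (Real.hasDerivAt_sinh s))
        have hb : HasDerivAt (fun s : ℝ => (10 - s ^ 2) * Real.cosh s)
            ((0 - 2 * s) * Real.cosh s + (10 - s ^ 2) * Real.sinh s) s := by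
          have hp : HasDerivAt (fun s : ℝ => 10 - s ^ 2) (0 - 2 * s) s := by
            have := ((hasDerivAt_pow 2 s))
            have := (hasDerivAt_const s (10 : ℝ)).sub (hasDerivAt_pow 2 s)
            exact this.congr_deriv (by simp)
          exact hp.mul (Real.hasDerivAt_cosh s)
        have := ha.sub hb
        exact this.congr_deriv (by ring)
      convert h using 1; ring
    · simp
    · exact hg3
  -- g1 ≥ 0
  have hg1 : ∀ s, 0 ≤ s → 0 ≤ 10 * s + 2 * s * Real.cosh s - (12 - s ^ 2) * Real.sinh s := by
    apply aux_nonneg_of_deriv _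
      (fun s => 10 + 4 * s * Real.sinh s - (10 - s ^ 2) * Real.cosh s)
    · intro s
      have ha : HasDerivAt (fun s : ℝ => 10 * s + 2 * s * Real.cosh s)
          (10 * 1 + ((2 * 1) * Real.cosh s + (2 * s) * Real.sinh s)) s :=
        ((hasDerivAt_id s).const_mul 10).add
          (((hasDerivAt_id s).const_mul 2).mul (Real.hasDerivAt_cosh s))
      have hp : HasDerivAt (fun s : ℝ => 12 - s ^ 2) (0 - 2 * s) s := by
        have := (hasDerivAt_const s (12 : ℝ)).sub (hasDerivAt_pow 2 s)
        exact this.congr_deriv (by simp)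
      have hb : HasDerivAt (fun s : ℝ => (12 - s ^ 2) * Real.sinh s)
          ((0 - 2 * s) * Real.sinh s + (12 - s ^ 2) * Real.cosh s) s :=
        hp.mul (Real.hasDerivAt_sinh s)
      have := ha.sub hb
      exact this.congr_deriv (by ring)
    · simp
    · exact hg2
  -- g0 ≥ 0
  have hg0 : ∀ s, 0 ≤ s → 0 ≤ 6 * s ^ 2 - (Real.cosh s - 1) * (12 - s ^ 2) := by
    apply aux_nonneg_of_deriv _
      (fun s => 10 * s + 2 * s * Real.cosh s - (12 - s ^ 2) * Real.sinh s)
    · intro s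
      have ha : HasDerivAt (fun s : ℝ => 6 * s ^ 2) (6 * (2 * s ^ 1)) s :=
        (hasDerivAt_pow 2 s).const_mul 6
      have hp : HasDerivAt (fun s : ℝ => 12 - s ^ 2) (0 - 2 * s) s := by
        have := (hasDerivAt_const s (12 : ℝ)).sub (hasDerivAt_pow 2 s)
        exact this.congr_deriv (by simp)
      have hq : HasDerivAt (fun s : ℝ => Real.cosh s - 1) (Real.sinh s - 0) s :=
        (Real.hasDerivAt_cosh s).sub (hasDerivAt_const s 1)
      have hb : HasDerivAt (fun s : ℝ => (Real.cosh s - 1) * (12 - s ^ 2))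
          ((Real.sinh s - 0) * (12 - s ^ 2) + (Real.cosh s - 1) * (0 - 2 * s)) s :=
        hq.mul hp
      have := ha.sub hb
      exact this.congr_deriv (by ring)
    · simp
    · exact hg1
  linarith [hg0 t ht]

/-- For every `z > 0`, `1/z² - 1/12 ≤ e^z/(e^z - 1)² ≤ 1/z²`. -/
theorem exp_inequality_one (z : ℝ) (hz : 0 < z) :
    1 / z ^ 2 - 1 / 12 ≤ Real.exp z / (Real.exp z - 1) ^ 2 ∧
      Real.exp z / (Real.exp z - 1) ^ 2 ≤ 1 / z ^ 2 := by
  have hA : 0 < Real.exp z := Real.exp_pos z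
  have hA1 : z + 1 ≤ Real.exp z := Real.add_one_le_exp z
  have hApos : 0 < Real.exp z - 1 := by linarith
  constructor
  · -- lower bound
    have hkey := cosh_key z hz.le
    rw [Real.cosh_eq, Real.exp_neg] at hkey
    have hAinv : Real.exp z * (Real.exp z)⁻¹ = 1 := mul_inv_cancel₀ (ne_of_gt hA)
    have hstep : (12 - z ^ 2) * (Real.exp z - 1) ^ 2 ≤ Real.exp z * (12 * z ^ 2) := by
      nlinarith [mul_le_mul_of_nonneg_left hkey (le_of_lt (by linarith : (0:ℝ) < 2 * Real.exp z))]
    have heq : 1 / z ^ 2 - 1 / 12 = (12 - z ^ 2) / (12 * z ^ 2) := by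
      rw [div_sub_div _ _ (by positivity : (z:ℝ) ^ 2 ≠ 0) (by norm_num : (12:ℝ) ≠ 0)]
      ring_nf
    rw [heq, div_le_div_iff₀ (by positivity) (by positivity)]
    linarith
  · -- upper bound
    have hs : z / 2 ≤ Real.sinh (z / 2) := Real.self_le_sinh_iff.mpr (by linarith)
    rw [Real.sinh_eq, Real.exp_neg] at hs
    set E := Real.exp (z / 2) with hE
    have hEpos : 0 < E := Real.exp_pos _
    have hEinv : E * E⁻¹ = 1 := mul_inv_cancel₀ (ne_of_gt hEpos)
    have hE2 : Real.exp z = E ^ 2 := by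
      rw [hE, sq, ← Real.exp_add]; congr 1; ring
    have hz2 : z ≤ E - E⁻¹ := by linarith
    rw [div_le_div_iff₀ (by positivity) (by positivity), hE2]
    have hEinvpos : 0 < E⁻¹ := by positivity
    have hEdiff : 0 < E - E⁻¹ := lt_of_lt_of_le hz hz2
    nlinarith [mul_le_mul hz2 hz2 hz.le hEdiff.le, sq_nonneg E, mul_pos hEpos hEpos]
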